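/- Let B be a band in which any two elements are 𝒥-comparable, i.e. for all x,y ∈ B, xyx = x or yxy = y (so B is a chain of rectangular bands). Then IG(B) is a regular semigroup. -/

import Mathlib

/-! Common definitions: free idempotent generated semigroups over bands,
generalised Green's relations, and abundancy notions. -/

/-- `(e, f)` is a *basic pair* if `ef ∈ {e,f}` or `fe ∈ {e,f}`. -/
def basicPair {B : Type*} [Mul B] (e f : B) : Prop :=
  e * f = e ∨ e * f = f ∨ f * e = e ∨ f * e = f

/-- The defining congruence of the free idempotent generated semigroup `IG B`:
the congruence on the free semigroup on `{ē : e ∈ B}` generated by the relations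
`ē f̄ = (ef)‾` for basic pairs `(e, f)`. -/
def igCon (B : Type*) [Semigroup B] : Con (FreeSemigroup B) :=
  conGen fun w₁ w₂ => ∃ e f : B, basicPair e f ∧
    w₁ = FreeSemigroup.of e * FreeSemigroup.of f ∧ w₂ = FreeSemigroup.of (e * f)

/-- The free idempotent generated semigroup over a band `B`. -/
abbrev IG (B : Type*) [Semigroup B] := (igCon B).Quotient

/-- The canonical generator `ē` of `IG B`. -/
def igOf {B : Type*} [Semigroup B] (e : B) : IG B :=
  ((FreeSemigroup.of e : FreeSemigroup B) : (igCon B).Quotient)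

/-- `prodSeq x a b = x a * x (a+1) * ⋯ * x b` (it is `x a` when `b ≤ a`). -/
def prodSeq {M : Type*} [Mul M] (x : ℕ → M) (a b : ℕ) : M :=
  (List.range (b - a)).foldl (fun acc i => acc * x (a + i + 1)) (x a)

/-- The word `x̄_a x̄_{a+1} ⋯ x̄_b` in the free semigroup on `{ē : e ∈ B}`. -/
def freeWord {B : Type*} (x : ℕ → B) (a b : ℕ) : FreeSemigroup B :=
  prodSeq (fun i => FreeSemigroup.of (x i)) a b

/-- The element `x̄_a x̄_{a+1} ⋯ x̄_b` of `IG B`. -/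
def igWord {B : Type*} [Semigroup B] (x : ℕ → B) (a b : ℕ) : IG B :=
  ((freeWord x a b : FreeSemigroup B) : (igCon B).Quotient)

/-- Green's relation `𝓡`: `a 𝓡 b` iff `a = b` or `as = b`, `bt = a` for some `s, t`. -/
def GreenR {S : Type*} [Semigroup S] (a b : S) : Prop :=
  a = b ∨ ∃ s t : S, a * s = b ∧ b * t = a

/-- Green's relation `𝓛`: `a 𝓛 b` iff `a = b` or `sa = b`, `tb = a` for some `s, t`. -/
def GreenL {S : Type*} [Semigroup S] (a b : S) : Prop :=
  a = b ∨ ∃ s t : S, s * a = b ∧ t * b = a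

/-- `a 𝓡* b` iff for all `x, y ∈ S¹`, `xa = ya ↔ xb = yb`. -/
def RStar {S : Type*} [Semigroup S] (a b : S) : Prop :=
  ∀ x y : WithOne S,
    x * (a : WithOne S) = y * (a : WithOne S) ↔ x * (b : WithOne S) = y * (b : WithOne S)

/-- `a 𝓛* b` iff for all `x, y ∈ S¹`, `ax = ay ↔ bx = by`. -/
def LStar {S : Type*} [Semigroup S] (a b : S) : Prop :=
  ∀ x y : WithOne S,
    (a : WithOne S) * x = (a : WithOne S) * y ↔ (b : WithOne S) * x = (b : WithOne S) * y

/-- `a 𝓡̃ b` iff for every idempotent `e`, `ea = a ↔ eb = b`. -/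
def RTilde {S : Type*} [Semigroup S] (a b : S) : Prop :=
  ∀ e : S, IsIdempotentElem e → (e * a = a ↔ e * b = b)

/-- `a 𝓛̃ b` iff for every idempotent `e`, `ae = a ↔ be = b`. -/
def LTilde {S : Type*} [Semigroup S] (a b : S) : Prop :=
  ∀ e : S, IsIdempotentElem e → (a * e = a ↔ b * e = b)

/-- A semigroup is *abundant* if every `𝓡*`-class and every `𝓛*`-class
contains an idempotent. -/
def Abundant (S : Type*) [Semigroup S] : Prop :=
  ∀ a : S, (∃ e : S, IsIdempotentElem e ∧ RStar a e) ∧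
    (∃ e : S, IsIdempotentElem e ∧ LStar a e)

/-- A semigroup is *weakly abundant* if every `𝓡̃`-class and every `𝓛̃`-class
contains an idempotent. -/
def WeaklyAbundant (S : Type*) [Semigroup S] : Prop :=
  ∀ a : S, (∃ e : S, IsIdempotentElem e ∧ RTilde a e) ∧
    (∃ e : S, IsIdempotentElem e ∧ LTilde a e)

/-- On a band, `x` and `y` are `𝒟`-equivalent iff `xyx = x` and `yxy = y`. -/
def dEquiv {B : Type*} [Mul B] (x y : B) : Prop :=
  x * y * x = x ∧ y * x * y = y

/-- On a band, `x` and `y` are `𝒥`-incomparable iff `xyx ≠ x` and `yxy ≠ y`. -/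
def jIncomp {B : Type*} [Mul B] (x y : B) : Prop :=
  x * y * x ≠ x ∧ y * x * y ≠ y

/-- One step of the reduction system induced by the presentation of `IG B`:
replace a factor `ē f̄`, with `(e,f)` a basic pair, by `(ef)‾`. -/
def RedStep {B : Type*} [Semigroup B] (w w' : FreeSemigroup B) : Prop :=
  ∃ (p q : List B) (e f : B), basicPair e f ∧
    w.head :: w.tail = p ++ e :: f :: q ∧
    w'.head :: w'.tail = p ++ (e * f) :: q

/-- A word is in *normal form* (irreducible) if no reduction step applies. -/
def IsNF {B : Type*} [Semigroup B] (w : FreeSemigroup B) : Prop :=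
  ∀ w', ¬ RedStep w w'

/-- `x̄₁ ⋯ x̄ₙ` (letters `x 1, …, x n`) is in *almost normal form* witnessed by
block boundaries `idx 0 = 0 < idx 1 < ⋯ < idx r = n`: within each block all
letters are `𝒟`-equivalent, and letters in adjacent blocks are incomparable. -/
def AlmostNF {B : Type*} [Mul B] (x : ℕ → B) (n r : ℕ) (idx : ℕ → ℕ) : Prop :=
  1 ≤ r ∧ idx 0 = 0 ∧ idx r = n ∧
  (∀ k < r, idx k < idx (k + 1)) ∧
  (∀ k < r, ∀ p q : ℕ, idx k < p → p ≤ idx (k + 1) → idx k < q → q ≤ idx (k + 1) →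
    dEquiv (x p) (x q)) ∧
  (∀ k : ℕ, k + 1 < r → ∀ p q : ℕ, idx k < p → p ≤ idx (k + 1) →
    idx (k + 1) < q → q ≤ idx (k + 2) → jIncomp (x p) (x q))

/-- Condition (P) for `IG B`. -/
def CondP (B : Type*) [Semigroup B] : Prop :=
  ∀ (n m r : ℕ) (u v : ℕ → B) (iu iv : ℕ → ℕ),
    AlmostNF u n r iu → AlmostNF v m r iv →
    igWord u 1 n = igWord v 1 m →
    ((∀ s : ℕ, 1 ≤ s → s ≤ r →
        (u (iu s) * v (iv s) = u (iu s) ∧ v (iv s) * u (iu s) = v (iv s)) →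
        igWord u 1 (iu s) = igWord v 1 (iv s)) ∧
      (∀ t : ℕ, t + 1 ≤ r →
        (u (iu t + 1) * v (iv t + 1) = v (iv t + 1) ∧
          v (iv t + 1) * u (iu t + 1) = u (iu t + 1)) →
        igWord u (iu t + 1) n = igWord v (iv t + 1) m))

/-- A normal band is *pliant* if for every `𝒟`-class `D` there is `c ∈ D` with
`u e u = c` for every `e ∈ D` and every `u` strictly `𝒥`-above `D`. -/
def Pliant (B : Type*) [Mul B] : Prop :=
  ∀ d : B, ∃ c : B, dEquiv c d ∧
    ∀ e u : B, dEquiv e d → (e * u * e = e ∧ u * e * u ≠ u) → u * e * u = c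

namespace IGaux

variable {B : Type*} [Semigroup B]

/-- The element of `IG B` represented by the word `ē ē₁ ⋯ ēₙ` (head `e`, tail `l`). -/
def igw (e : B) (l : List B) : IG B := l.foldl (fun acc x => acc * igOf x) (igOf e)

lemma ig_basic {e f : B} (h : basicPair e f) : igOf e * igOf f = igOf (e * f) := by
  show (↑(FreeSemigroup.of e) : (igCon B).Quotient) * ↑(FreeSemigroup.of f) = _
  rw [← Con.coe_mul]
  exact (Con.eq _).2 (ConGen.Rel.of _ _ ⟨e, f, h, rfl, rfl⟩)

lemma foldl_mul (a b : IG B) (l : List B) :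
    l.foldl (fun acc x => acc * igOf x) (a * b) =
      a * l.foldl (fun acc x => acc * igOf x) b := by
  induction l generalizing b with
  | nil => rfl
  | cons f t ih => simp only [List.foldl_cons]; rw [mul_assoc, ih]

lemma igw_cons (e f : B) (l : List B) : igw e (f :: l) = igOf e * igw f l := by
  simp only [igw, List.foldl_cons]
  exact foldl_mul _ _ l

lemma igOf_idem (hband : ∀ x : B, x * x = x) (e : B) : igOf e * igOf e = igOf e := by
  rw [ig_basic (Or.inl (hband e)), hband e]

lemma self_absorb (hband : ∀ x : B, x * x = x) (m : List B) (e : B) :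
    igOf e * igw e m = igw e m := by
  cases m with
  | nil => exact igOf_idem hband e
  | cons f t => rw [igw_cons, ← mul_assoc, igOf_idem hband e]

lemma igw_concat (m₁ : List B) (e f : B) (m₂ : List B) :
    igw e m₁ * igw f m₂ = igw e (m₁ ++ f :: m₂) := by
  induction m₁ generalizing e with
  | nil => exact (igw_cons e f m₂).symm
  | cons g t ih =>
      rw [List.cons_append, igw_cons, igw_cons, mul_assoc, ih]

lemma igw_repr (a : IG B) : ∃ e m, a = igw e m := by
  induction a using Con.induction_on with
  | H w =>
    induction w using FreeSemigroup.recOnMul with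
    | ih1 x => exact ⟨x, [], rfl⟩
    | ih2 x y hx hy =>
        obtain ⟨e₁, m₁, h₁⟩ := hx
        obtain ⟨e₂, m₂, h₂⟩ := hy
        exact ⟨e₁, m₁ ++ e₂ :: m₂, by rw [Con.coe_mul, h₁, h₂, igw_concat]⟩

lemma band_sandwich (hband : ∀ x : B, x * x = x) (x y : B) :
    (x * y * x) * y * (x * y * x) = x * y * x := by
  have h := hband (x * y)
  calc (x * y * x) * y * (x * y * x)
      = ((x * y) * (x * y)) * ((x * y) * x) := by simp only [mul_assoc]
    _ = (x * y) * ((x * y) * x) := by rw [h]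
    _ = ((x * y) * (x * y)) * x := by simp only [mul_assoc]
    _ = (x * y) * x := by rw [h]

lemma normalize (hband : ∀ x : B, x * x = x)
    (hchain : ∀ p q : B, p * q * p = p ∨ q * p * q = q) :
    ∀ (l : List B) (e : B), ∃ d m, igw e l = igw d m ∧
      List.Chain (fun x y => x * y * x = x) d m := by
  intro l
  induction l with
  | nil => exact fun e => ⟨e, [], rfl, List.Chain.nil⟩
  | cons f t ih =>
      intro e
      obtain ⟨d, m, heq, hch⟩ := ih f
      have hstep : igw e (f :: t) = igOf e * igw d m := by rw [igw_cons, heq]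
      rcases hchain e d with h | h
      · exact ⟨e, d :: m, by rw [hstep, igw_cons], List.Chain.cons h hch⟩
      · -- d * e * d = d; replace the head `e` by `e * d * e`
        have hb1 : basicPair (d * e) d := Or.inr (Or.inl h)
        have hb2 : basicPair e (d * e) :=
          Or.inr (Or.inr (Or.inr (by rw [mul_assoc, hband e])))
        have key : igOf e * igOf d = igOf (e * d * e) * igOf d := by
          have h1 : igOf (d * e) * igOf d = igOf d := by rw [ig_basic hb1, h]
          have h2 : igOf e * igOf (d * e) = igOf (e * d * e) := by
            rw [ig_basic hb2, mul_assoc]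
          rw [← h1, ← mul_assoc, h2, h1]
        refine ⟨e * d * e, d :: m, ?_, List.Chain.cons (band_sandwich hband e d) hch⟩
        rw [hstep, igw_cons, ← self_absorb hband m d, ← mul_assoc, key, mul_assoc]

lemma inv_exists (hband : ∀ x : B, x * x = x) :
    ∀ (m : List B) (e : B), List.Chain (fun x y => x * y * x = x) e m →
      ∃ x : IG B, igw e m * x = igOf e := by
  intro m
  induction m with
  | nil => exact fun e _ => ⟨igOf e, igOf_idem hband e⟩
  | cons f t ih =>
      intro e hch
      obtain ⟨h, hch⟩ := List.isChain_cons_cons.1 hch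
      obtain ⟨x, hx⟩ := ih f hch
      refine ⟨x * igOf (f * e), ?_⟩
      have hb1 : basicPair f (f * e) :=
        Or.inr (Or.inl (by rw [← mul_assoc, hband f]))
      have hb2 : basicPair e (f * e) :=
        Or.inr (Or.inr (Or.inr (by rw [mul_assoc, hband e])))
      have h1 : igOf f * igOf (f * e) = igOf (f * e) := by
        rw [ig_basic hb1, ← mul_assoc, hband f]
      have h2 : igOf e * igOf (f * e) = igOf e := by
        rw [ig_basic hb2, show e * (f * e) = e by rw [← mul_assoc]; exact h]
      rw [igw_cons, ← mul_assoc, mul_assoc (igOf e), hx, mul_assoc, h1, h2]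

end IGaux

/-- Let `B` be a band in which any two elements are
`𝒥`-comparable (a chain of rectangular bands). Then `IG B` is regular. -/
theorem IG_chain_of_rectangular_bands_regular
    {B : Type*} [Semigroup B] (hband : ∀ x : B, x * x = x)
    (hchain : ∀ p q : B, p * q * p = p ∨ q * p * q = q) :
    ∀ a : IG B, ∃ w : IG B, a * w * a = a := by
  intro a
  obtain ⟨e, m, rfl⟩ := IGaux.igw_repr a
  obtain ⟨d, m', heq, hch⟩ := IGaux.normalize hband hchain m e
  obtain ⟨x, hx⟩ := IGaux.inv_exists hband m' d hch
  exact ⟨x, by rw [heq, hx, IGaux.self_absorb hband]⟩
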